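/- For every η > 0 there exists a constant D(η) > 0 such that for every K > 0, every t ∈ (0,1), and every n ≥ D(η)·K²/(t(1−t)): every x ∈ E_{t,K}^n satisfies Mμ(x) > e^{K²/(2+η)}, where μ is the counting measure on ℤ^n. -/

import Mathlib

open MeasureTheory Metric Filter ProbabilityTheory
open scoped ENNReal NNReal

/-- The cubic centered Hardy--Littlewood maximal function of a measure `μ` on `ℝ^n`
(with the sup norm, so that `Metric.closedBall x r` is the cube `Q(x,r)` of center `x`
and edge length `2r`). -/
noncomputable def maximalFn {n : ℕ} (μ : Measure (Fin n → ℝ)) (x : Fin n → ℝ) : ℝ≥0∞ :=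
  ⨆ (r : ℝ) (_ : 0 < r), μ (closedBall x r) / volume (closedBall x r)


/-- The counting measure on the integer lattice `ℤ^n ⊂ ℝ^n`:
`μ(A) = card (A ∩ ℤ^n)`. -/
noncomputable def latticeMeasure (n : ℕ) : Measure (Fin n → ℝ) :=
  Measure.sum fun k : Fin n → ℤ => Measure.dirac fun i => (k i : ℝ)


/-- A number `y ∈ [0,1]` is `t`-centered if `(1-t)/2 ≤ y ≤ (1+t)/2`. -/
def tCentered (t y : ℝ) : Prop := (1 - t) / 2 ≤ y ∧ y ≤ (1 + t) / 2


/-- `E_{t,K}^n`: the set of `x ∈ [0,1]^n` with at least `n t + K √(n t (1-t))`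
`t`-centered coordinates. -/
def ESet (n : ℕ) (t K : ℝ) : Set (Fin n → ℝ) :=
  {x | x ∈ Set.Icc 0 1 ∧
    (n : ℝ) * t + K * Real.sqrt (n * t * (1 - t)) ≤ ({i : Fin n | tCentered t (x i)}.ncard : ℝ)}


section Aux
open Real

-- Lemma B
lemma logB {ε : ℝ} (hε : 0 ≤ ε) : ε - ε^2 ≤ Real.log (1+ε) := by
  have h1 : (0:ℝ) < 1 + ε := by linarith
  have h2 := Real.log_le_sub_one_of_pos (show (0:ℝ) < (1+ε)⁻¹ by positivity)
  rw [Real.log_inv] at h2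
  have h3 : 1 - (1+ε)⁻¹ ≤ Real.log (1+ε) := by linarith
  have h4 : ε - ε^2 ≤ 1 - (1+ε)⁻¹ := by
    rw [le_sub_iff_add_le, ← le_sub_iff_add_le']
    rw [inv_le_iff_one_le_mul₀ h1]  -- guess
    nlinarith
  linarith

-- derivative helper
lemma hasDerivG {ε : ℝ} (hε : 0 < ε) {y : ℝ} (hy : 0 ≤ y) :
    HasDerivAt (fun y : ℝ => Real.log (1+y*ε) + ε^2*y^2/2) (ε/(1+y*ε) + ε^2*y) y := by
  have hne : (1+y*ε) ≠ 0 := by positivity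
  have h1 : HasDerivAt (fun y : ℝ => 1 + y*ε) ε y := by
    simpa using ((hasDerivAt_id y).mul_const ε).const_add 1
  have h2 : HasDerivAt (fun y : ℝ => Real.log (1+y*ε)) (ε/(1+y*ε)) y := by
    have := (Real.hasDerivAt_log hne).comp y h1
    simpa [div_eq_inv_mul, Function.comp_def] using this
  have h3 : HasDerivAt (fun y : ℝ => ε^2*y^2/2) (ε^2*y) y := by
    have := ((hasDerivAt_pow 2 y).const_mul (ε^2)).div_const 2
    refine this.congr_deriv ?_
    norm_num
    ring
  exact h2.add h3

lemma convG {ε : ℝ} (hε : 0 < ε) :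
    ConvexOn ℝ (Set.Ici 0) (fun y : ℝ => Real.log (1+y*ε) + ε^2*y^2/2) := by
  have hd : ∀ y ∈ interior (Set.Ici (0:ℝ)),
      deriv (fun y : ℝ => Real.log (1+y*ε) + ε^2*y^2/2) y = ε/(1+y*ε) + ε^2*y := by
    intro y hy
    rw [interior_Ici] at hy
    exact (hasDerivG hε (le_of_lt hy)).deriv
  apply MonotoneOn.convexOn_of_deriv (convex_Ici 0)
  · apply ContinuousOn.add
    · apply ContinuousOn.log (by fun_prop)
      intro y hy
      have : (0:ℝ) ≤ y := hy
      positivity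
    · fun_prop
  · intro y hy
    rw [interior_Ici] at hy
    exact (hasDerivG hε hy.le).differentiableAt.differentiableWithinAt
  · intro y1 h1 y2 h2 h12
    rw [interior_Ici] at h1 h2
    have hy1 : (0:ℝ) < y1 := h1
    have hy2 : (0:ℝ) < y2 := h2
    rw [hd y1 (by rwa [interior_Ici]), hd y2 (by rwa [interior_Ici])]
    have p1 : (0:ℝ) < 1 + y1*ε := by nlinarith
    have p2 : (0:ℝ) < 1 + y2*ε := by nlinarith
    have key : ε/(1+y1*ε) - ε/(1+y2*ε) = ε*ε*(y2-y1)/((1+y1*ε)*(1+y2*ε)) := by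
      field_simp; ring
    have hq : (1:ℝ) ≤ (1+y1*ε)*(1+y2*ε) := by nlinarith [mul_pos hy1 hε, mul_pos hy2 hε, mul_pos (mul_pos hy1 hε) (mul_pos hy2 hε)]
    have hb : ε*ε*(y2-y1)/((1+y1*ε)*(1+y2*ε)) ≤ ε^2*(y2-y1) := by
      rw [div_le_iff₀ (by positivity)]
      nlinarith [mul_le_mul_of_nonneg_left hq (show (0:ℝ) ≤ ε^2*(y2-y1) by nlinarith)]
    nlinarith [key, hb]

-- Lemma A
lemma logA {ε t : ℝ} (hε : 0 < ε) (ht0 : 0 ≤ t) (ht1 : t ≤ 1) :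
    Real.log (1+t*ε) ≤ t * Real.log (1+ε) + ε^2*t*(1-t)/2 := by
  have h := (convG hε).2 (Set.mem_Ici.mpr le_rfl) (Set.mem_Ici.mpr zero_le_one)
    (by linarith : (0:ℝ) ≤ 1 - t) ht0 (by ring)
  simp only [smul_eq_mul] at h
  have h0 : ((1-t) * 0 + t * 1 : ℝ) = t := by ring
  rw [h0] at h
  norm_num at h
  nlinarith [h]

lemma numericStep (η K s ε β : ℝ) (hη : 0 < η) (hK : 0 < K) (hε : 0 < ε) (hβ : 0 < β)
    (hsK : s ≤ K) (hs2 : K*(1-2*β) ≤ s) (hεβ : ε ≤ β) (hB : β ≤ η/(6*(2+η))) :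
    K^2/(2+η) < K*s*(1-ε) - s^2/2 := by
  have h2η : (0:ℝ) < 2+η := by linarith
  have hβ6 : β ≤ 1/6 := by
    have : η/(6*(2+η)) ≤ 1/6 := by
      rw [div_le_div_iff₀ (by positivity) (by norm_num)]
      nlinarith
    linarith
  have hs0 : 0 ≤ s := by nlinarith
  rw [div_lt_iff₀ h2η]
  have key : β + 2*β^2 ≤ 2*η/(9*(2+η)) := by
    have : β + 2*β^2 ≤ (4/3)*β := by nlinarith
    have h2 : (4/3)*β ≤ (4/3)*(η/(6*(2+η))) := by linarith
    calc β + 2*β^2 ≤ (4/3)*β := this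
      _ ≤ (4/3)*(η/(6*(2+η))) := h2
      _ = 2*η/(9*(2+η)) := by field_simp; ring
  have key2 : (β + 2*β^2)*(2+η) ≤ 2*η/9 := by
    calc (β+2*β^2)*(2+η) ≤ 2*η/(9*(2+η))*(2+η) := mul_le_mul_of_nonneg_right key h2η.le
      _ = 2*η/9 := by field_simp
  -- K*s*(1-ε) - s^2/2 ≥ K^2*(1/2 - β - 2β^2)
  have hmain : K^2*(1/2 - β - 2*β^2) ≤ K*s*(1-ε) - s^2/2 := by
    nlinarith [sq_nonneg (K - s), mul_nonneg hs0 hε.le, sq_nonneg β, mul_pos hK hK,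
      mul_le_mul_of_nonneg_left hεβ (mul_nonneg hK.le hs0),
      mul_le_mul_of_nonneg_right hs2 hs0, mul_le_mul_of_nonneg_left hsK hK.le]
  nlinarith [mul_pos hK hK, key2, mul_le_mul_of_nonneg_right key2 (mul_pos hK hK).le]

set_option maxHeartbeats 2000000 in
lemma core (η K t : ℝ) (n m N : ℕ) (hη : 0 < η) (hK : 0 < K) (ht : 0 < t) (ht1 : t < 1)
    (hn : 36*(2+η)^2/η^2 * K^2/(t*(1-t)) ≤ (n:ℝ))
    (hm : (n:ℝ)*t + K*Real.sqrt (↑n*t*(1-t)) ≤ (m:ℝ)) (hmn : m ≤ n)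
    (hN1 : Real.sqrt (↑n*t*(1-t))/K ≤ 2*(N:ℝ)+1)
    (hN2 : (2*(N:ℝ)+1) < Real.sqrt (↑n*t*(1-t))/K + 2) :
    Real.exp (K^2/(2+η)) * (2*(N:ℝ)+1+t)^n < (2*(N:ℝ)+2)^m * (2*(N:ℝ)+1)^(n-m) := by
  have h2η : (0:ℝ) < 2+η := by linarith
  have ht1' : (0:ℝ) < 1 - t := by linarith
  -- n positive
  have hnpos : (0:ℝ) < (n:ℝ) := lt_of_lt_of_le (by positivity) hn
  set c := Real.sqrt (↑n*t*(1-t)) with hcdef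
  clear_value c
  have hc2 : c^2 = ↑n*t*(1-t) := by rw [hcdef]; exact Real.sq_sqrt (by positivity)
  have hc : 0 < c := by rw [hcdef]; exact Real.sqrt_pos.mpr (by positivity)
  -- c ≥ 6(2+η)/η K
  have hcK : 6*(2+η)/η * K ≤ c := by
    have h1 : 36*(2+η)^2/η^2 * K^2 ≤ (n:ℝ)*(t*(1-t)) := by
      rw [div_le_iff₀ (by positivity)] at hn
      linarith
    have h2 : (6*(2+η)/η * K)^2 ≤ c^2 := by
      rw [hc2]; calc (6*(2+η)/η * K)^2 = 36*(2+η)^2/η^2 * K^2 := by ring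
        _ ≤ (n:ℝ)*(t*(1-t)) := h1
        _ = ↑n*t*(1-t) := by ring
    calc 6*(2+η)/η * K = Real.sqrt ((6*(2+η)/η * K)^2) := (Real.sqrt_sq (by positivity)).symm
      _ ≤ Real.sqrt (c^2) := Real.sqrt_le_sqrt h2
      _ = c := Real.sqrt_sq hc.le
  set β := K/c with hβdef
  clear_value β
  have hβ : 0 < β := by rw [hβdef]; positivity
  have hB : β ≤ η/(6*(2+η)) := by
    rw [hβdef, div_le_div_iff₀ hc (by positivity)]
    calc K * (6*(2+η)) = 6*(2+η)/η*K*η := by field_simp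
      _ ≤ c * η := mul_le_mul_of_nonneg_right hcK hη.le
      _ = η * c := mul_comm c η
  set ε := 1/(2*(N:ℝ)+1) with hεdef
  clear_value ε
  have hNpos : (0:ℝ) < 2*(N:ℝ)+1 := by positivity
  have hε : 0 < ε := by rw [hεdef]; positivity
  have hε1 : ε ≤ 1 := by rw [hεdef]; rw [div_le_one hNpos]; linarith [Nat.cast_nonneg (α := ℝ) N]
  have hεβ : ε ≤ β := by
    rw [hεdef, hβdef, div_le_div_iff₀ hNpos hc]
    calc 1 * c = c := one_mul c
      _ ≤ K * (2*(N:ℝ)+1) := by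
        rw [div_le_iff₀ hK] at hN1; linarith
  set s := ε * c with hsdef
  clear_value s
  have hs : 0 < s := by rw [hsdef]; exact mul_pos hε hc
  have hsK : s ≤ K := by
    calc s = ε * c := hsdef
      _ ≤ β * c := mul_le_mul_of_nonneg_right hεβ hc.le
      _ = K := by rw [hβdef]; field_simp
  have hs2 : K*(1-2*β) ≤ s := by
    have hseq : s = c/(2*(N:ℝ)+1) := by rw [hsdef, hεdef]; ring
    rw [hseq, le_div_iff₀ hNpos]
    rcases le_or_gt (1-2*β) 0 with hb | hb
    · have h0 : K*(1-2*β) ≤ 0 := by nlinarith [mul_le_mul_of_nonneg_left hb hK.le]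
      nlinarith [mul_le_mul_of_nonneg_right h0 hNpos.le]
    · have hKb : 0 < K*(1-2*β) := by positivity
      have h2N : (2*(N:ℝ)+1) < (c+2*K)/K := by
        rw [lt_div_iff₀ hK]; rw [div_add' _ _ _ hK.ne'] at hN2
        rw [lt_div_iff₀ hK] at hN2; linarith
      have hstep := mul_lt_mul_of_pos_left h2N hKb
      have hfin : K*(1-2*β)*((c+2*K)/K) ≤ c := by
        rw [hβdef]
        have heq : K*(1-2*(K/c))*((c+2*K)/K) = c - 4*K^2/c := by field_simp; ring
        rw [heq]
        have : 0 < 4*K^2/c := by positivity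
        linarith
      linarith
  -- logs
  have hb2 : (0:ℝ) < 2*(N:ℝ)+2 := by positivity
  have hb3 : (0:ℝ) < 2*(N:ℝ)+1+t := by positivity
  have hb4 : (0:ℝ) < 1+ε := by linarith
  have hb5 : (0:ℝ) < 1+t*ε := by positivity
  apply (Real.log_lt_log_iff (by positivity) (by positivity)).mp
  rw [Real.log_mul (Real.exp_ne_zero _) (by positivity), Real.log_exp,
    Real.log_mul (by positivity) (by positivity), Real.log_pow, Real.log_pow, Real.log_pow]
  have hlog1 : Real.log (2*(N:ℝ)+2) = Real.log (2*(N:ℝ)+1) + Real.log (1+ε) := by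
    have hh : (2*(N:ℝ)+1)*(1+ε) = 2*(N:ℝ)+2 := by rw [hεdef]; field_simp; ring
    rw [← hh, Real.log_mul hNpos.ne' hb4.ne']
  have hlog2 : Real.log (2*(N:ℝ)+1+t) = Real.log (2*(N:ℝ)+1) + Real.log (1+t*ε) := by
    have hh : (2*(N:ℝ)+1)*(1+t*ε) = 2*(N:ℝ)+1+t := by rw [hεdef]; field_simp
    rw [← hh, Real.log_mul hNpos.ne' hb5.ne']
  have hnm : ((n-m : ℕ):ℝ) = (n:ℝ) - (m:ℝ) := by
    rw [Nat.cast_sub hmn]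
  rw [hlog1, hlog2, hnm]
  have hlogε : 0 ≤ Real.log (1+ε) := Real.log_nonneg (by linarith)
  have H1 : ((n:ℝ)*t + K*c) * Real.log (1+ε) ≤ (m:ℝ) * Real.log (1+ε) :=
    mul_le_mul_of_nonneg_right hm hlogε
  have H2 : (n:ℝ) * Real.log (1+t*ε) ≤ (n:ℝ)*(t * Real.log (1+ε) + ε^2*t*(1-t)/2) :=
    mul_le_mul_of_nonneg_left (logA hε ht.le ht1.le) hnpos.le
  have H3 : K*c*(ε - ε^2) ≤ K*c*Real.log (1+ε) :=
    mul_le_mul_of_nonneg_left (logB hε.le) (by positivity)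
  have H4 : K^2/(2+η) < K*s*(1-ε) - s^2/2 := numericStep η K s ε β hη hK hε hβ hsK hs2 hεβ hB
  have he1 : (n:ℝ)*(ε^2*t*(1-t)/2) = s^2/2 := by
    rw [hsdef, mul_pow, hc2]; ring
  have he2 : K*c*(ε - ε^2) = K*s*(1-ε) := by rw [hsdef]; ring
  linarith [H1, H2, H3, H4, he1, he2]

lemma lattice_lower (n : ℕ) (x : Fin n → ℝ) (r : ℝ) (hr : 0 ≤ r) :
    ((∏ i : Fin n, (Finset.Icc ⌈x i - r⌉ ⌊x i + r⌋).card : ℕ) : ℝ≥0∞)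
      ≤ latticeMeasure n (closedBall x r) := by
  classical
  set S : Finset (Fin n → ℤ) := Fintype.piFinset fun i => Finset.Icc ⌈x i - r⌉ ⌊x i + r⌋ with hS
  have hA : MeasurableSet (closedBall x r) := measurableSet_closedBall
  have hmem : ∀ k ∈ S, (fun i => (k i : ℝ)) ∈ closedBall x r := by
    intro k hk
    rw [mem_closedBall, dist_pi_le_iff hr]
    intro i
    have hki := Fintype.mem_piFinset.mp hk i
    rw [Finset.mem_Icc] at hki
    have h1 : x i - r ≤ (k i : ℝ) := le_trans (Int.ceil_le.mp le_rfl |>.trans (by exact_mod_cast Int.cast_le.mpr hki.1)) le_rfl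
    have h2 : (k i : ℝ) ≤ x i + r := le_trans (by exact_mod_cast Int.cast_le.mpr hki.2) (Int.floor_le _)
    rw [Real.dist_eq, abs_le]
    constructor <;> linarith
  calc ((∏ i : Fin n, (Finset.Icc ⌈x i - r⌉ ⌊x i + r⌋).card : ℕ) : ℝ≥0∞)
      = (S.card : ℝ≥0∞) := by rw [hS, Fintype.card_piFinset]
    _ = ∑ k ∈ S, (1 : ℝ≥0∞) := by simp
    _ = ∑ k ∈ S, Measure.dirac (fun i => ((k i : ℤ) : ℝ)) (closedBall x r) := by
        apply Finset.sum_congr rfl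
        intro k hk
        rw [Measure.dirac_apply' _ hA, Set.indicator_of_mem (hmem k hk)]
        rfl
    _ ≤ ∑' k : Fin n → ℤ, Measure.dirac (fun i => ((k i : ℤ) : ℝ)) (closedBall x r) :=
        ENNReal.sum_le_tsum S
    _ = latticeMeasure n (closedBall x r) := by
        rw [latticeMeasure, Measure.sum_apply _ hA]

end Aux

theorem maximal_large_on_ESet (η : ℝ) (hη : 0 < η) :
    ∃ D : ℝ, 0 < D ∧ ∀ K : ℝ, 0 < K → ∀ t : ℝ, 0 < t → t < 1 →
      ∀ n : ℕ, D * K ^ 2 / (t * (1 - t)) ≤ (n : ℝ) →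
        ∀ x ∈ ESet n t K,
          ENNReal.ofReal (Real.exp (K ^ 2 / (2 + η))) < maximalFn (latticeMeasure n) x := by
  classical
  refine ⟨36*(2+η)^2/η^2, by positivity, ?_⟩
  intro K hK t ht ht1 n hn x hx
  obtain ⟨hx01, hcard⟩ := hx
  have ht1' : (0:ℝ) < 1 - t := by linarith
  have h2η : (0:ℝ) < 2 + η := by linarith
  -- the centered coordinate set
  set C : Finset (Fin n) := Finset.univ.filter (fun i => tCentered t (x i)) with hC
  have hCset : {i : Fin n | tCentered t (x i)} = ↑C := by
    ext i; simp [hC]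
  have hm : (n:ℝ)*t + K*Real.sqrt (↑n*t*(1-t)) ≤ (C.card : ℝ) := by
    rw [hCset, Set.ncard_coe_finset] at hcard
    exact_mod_cast hcard
  have hmn : C.card ≤ n := by
    calc C.card ≤ Finset.univ.card := Finset.card_le_univ C
      _ = n := by simp
  -- c ≥ K
  set c := Real.sqrt (↑n*t*(1-t)) with hcdef
  have hnpos : (0:ℝ) < (n:ℝ) := lt_of_lt_of_le (by positivity) hn
  have hcpos : 0 < c := by rw [hcdef]; exact Real.sqrt_pos.mpr (by positivity)
  have hcK : K ≤ c := by
    have hD1 : (1:ℝ) ≤ 36*(2+η)^2/η^2 := by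
      rw [le_div_iff₀ (by positivity)]
      nlinarith
    have h1 : K^2 ≤ (n:ℝ)*(t*(1-t)) := by
      rw [div_le_iff₀ (by positivity)] at hn
      nlinarith
    calc K = Real.sqrt (K^2) := (Real.sqrt_sq hK.le).symm
      _ ≤ Real.sqrt (↑n*t*(1-t)) := Real.sqrt_le_sqrt (by nlinarith)
  -- choice of N
  set N : ℕ := ⌈(c/K - 1)/2⌉₊ with hN
  have hq0 : (0:ℝ) ≤ (c/K - 1)/2 := by
    have : (1:ℝ) ≤ c/K := (one_le_div hK).mpr hcK
    linarith
  have hN1 : c/K ≤ 2*(N:ℝ)+1 := by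
    have := Nat.le_ceil ((c/K - 1)/2)
    rw [← hN] at this
    linarith
  have hN2 : (2*(N:ℝ)+1) < c/K + 2 := by
    have := Nat.ceil_lt_add_one hq0
    rw [← hN] at this
    linarith
  -- radius
  set r : ℝ := (N:ℝ) + (1+t)/2 with hr'
  have hr : 0 < r := by rw [hr']; positivity
  -- per coordinate counts
  have hcount : ∀ i : Fin n,
      (if i ∈ C then 2*N+2 else 2*N+1) ≤ (Finset.Icc ⌈x i - r⌉ ⌊x i + r⌋).card := by
    intro i
    have hx0 : (0:ℝ) ≤ x i := (Set.mem_Icc.mp hx01).1 i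
    have hx1 : x i ≤ 1 := (Set.mem_Icc.mp hx01).2 i
    rw [Int.card_Icc]
    by_cases hiC : i ∈ C
    · simp only [hiC, if_true]
      have hcent : tCentered t (x i) := by
        rw [hC] at hiC; exact (Finset.mem_filter.mp hiC).2
      obtain ⟨hc1, hc2⟩ := hcent
      have ha : ⌈x i - r⌉ ≤ -(N:ℤ) := by
        apply Int.ceil_le.mpr
        push_cast
        rw [hr']; linarith
      have hb : ((N:ℤ)+1) ≤ ⌊x i + r⌋ := by
        apply Int.le_floor.mpr
        push_cast
        rw [hr']; linarith
      omega
    · simp only [hiC, if_false]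
      have ha : ⌈x i - r⌉ + 2*(N:ℤ) ≤ ⌊x i + r⌋ := by
        apply Int.le_floor.mpr
        push_cast
        have := Int.ceil_lt_add_one (x i - r)
        rw [hr'] at *
        linarith
      omega
  -- product bound
  have hprod : ((2*N+2)^C.card * (2*N+1)^(n - C.card) : ℕ)
      ≤ ∏ i : Fin n, (Finset.Icc ⌈x i - r⌉ ⌊x i + r⌋).card := by
    have h1 : (∏ i ∈ C, (2*N+2)) * (∏ i ∈ Cᶜ, (2*N+1))
        = ∏ i : Fin n, (if i ∈ C then 2*N+2 else 2*N+1) := by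
      rw [← Finset.prod_mul_prod_compl C (fun i => if i ∈ C then 2*N+2 else 2*N+1)]
      congr 1
      · exact Finset.prod_congr rfl fun i hi => by simp [hi]
      · exact Finset.prod_congr rfl fun i hi => by simp [Finset.mem_compl.mp hi]
    have h2 : (∏ i ∈ C, (2*N+2)) * (∏ i ∈ Cᶜ, (2*N+1))
        = (2*N+2)^C.card * (2*N+1)^(n - C.card) := by
      rw [Finset.prod_const, Finset.prod_const, Finset.card_compl]
      simp
    rw [← h2, h1]
    exact Finset.prod_le_prod' fun i _ => hcount i
  -- volume
  have hvol : volume (closedBall x r) = ENNReal.ofReal ((2*r)^n) := by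
    rw [Real.volume_pi_closedBall x hr.le]
    simp
  -- real inequality
  have hreal : Real.exp (K^2/(2+η)) * (2*r)^n
      < ((2*N+2)^C.card * (2*N+1)^(n - C.card) : ℕ) := by
    have h2r : 2*r = 2*(N:ℝ)+1+t := by rw [hr']; ring
    rw [h2r]
    push_cast
    exact core η K t n C.card N hη hK ht ht1 hn hm hmn hN1 hN2
  -- ENNReal conclusion
  have hfinal : ENNReal.ofReal (Real.exp (K^2/(2+η)))
      < latticeMeasure n (closedBall x r) / volume (closedBall x r) := by
    rw [hvol, ENNReal.lt_div_iff_mul_lt (Or.inl (by simp; positivity)) (Or.inl ENNReal.ofReal_ne_top)]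
    rw [← ENNReal.ofReal_mul (Real.exp_nonneg _)]
    calc ENNReal.ofReal (Real.exp (K^2/(2+η)) * (2*r)^n)
        < (((2*N+2)^C.card * (2*N+1)^(n - C.card) : ℕ) : ℝ≥0∞) := by
          rw [← ENNReal.ofReal_natCast]
          exact ENNReal.ofReal_lt_ofReal_iff (by positivity) |>.mpr hreal
      _ ≤ ((∏ i : Fin n, (Finset.Icc ⌈x i - r⌉ ⌊x i + r⌋).card : ℕ) : ℝ≥0∞) := by
          exact_mod_cast hprod
      _ ≤ latticeMeasure n (closedBall x r) := lattice_lower n x r hr.le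
  refine lt_of_lt_of_le hfinal ?_
  rw [maximalFn]
  exact le_iSup₂ (f := fun (ρ : ℝ) (_ : 0 < ρ) =>
    latticeMeasure n (closedBall x ρ) / volume (closedBall x ρ)) r hr
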